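/- For every subset Σ of ℕ \ {0,1} with 1 ≤ |Σ| ≤ 3, there exists a numerical semigroup T (a submonoid of ℕ with finite complement) and an element x ∈ T such that the set of lengths of factorizations of x into atoms of T equals Σ. -/

import Mathlib

/-- `a` is an atom of the additive submonoid `T` of `ℕ`: a nonzero element of `T`
that is not a sum of two nonzero elements of `T`. -/
def NumAtom (T : AddSubmonoid ℕ) (a : ℕ) : Prop :=
  a ∈ T ∧ a ≠ 0 ∧ ¬ ∃ b c : ℕ, b ∈ T ∧ c ∈ T ∧ b ≠ 0 ∧ c ≠ 0 ∧ a = b + c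

/-- `AS T x` is the set of lengths of factorizations of `x` into atoms of `T`:
the set of `m : ℕ` such that `x` is a sum of `m` atoms of `T`. -/
def AS (T : AddSubmonoid ℕ) (x : ℕ) : Set ℕ :=
  { m | ∃ s : Multiset ℕ, (∀ a ∈ s, NumAtom T a) ∧ Multiset.card s = m ∧ s.sum = x }

/-- digit extraction over ℤ -/
lemma digit_aux {Wz A B : ℤ} (hW : 0 < Wz) (hA : |A| < Wz) (h : A + Wz * B = 0) :
    A = 0 ∧ B = 0 := by
  have hB : B = 0 := by
    by_contra hB
    have hB1 : 1 ≤ |B| := by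
      rcases lt_trichotomy B 0 with h'|h'|h'
      · rw [abs_of_neg h']; omega
      · exact absurd h' hB
      · rw [abs_of_pos h']; omega
    have hA' : A = -(Wz * B) := by linarith
    have h2 : |A| = Wz * |B| := by rw [hA', abs_neg, abs_mul, abs_of_pos hW]
    have h3 : Wz * 1 ≤ Wz * |B| := by
      exact mul_le_mul_of_nonneg_left hB1 hW.le
    rw [mul_one] at h3
    linarith
  refine ⟨?_, hB⟩
  rw [hB, mul_zero, add_zero] at h
  exact h

lemma count_bound {k g K W C : ℕ} (hW : 0 < W) (h1 : k * g ≤ C * W)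
    (h2 : W ≤ g + K) (h3 : 2 * K ≤ W) : k ≤ 2 * C := by
  have t1 : k * W ≤ k * g + k * K := by
    calc k * W ≤ k * (g + K) := Nat.mul_le_mul_left _ h2
    _ = k * g + k * K := by ring
  have t2 : 2 * (k * K) ≤ k * W := by
    calc 2 * (k * K) = k * (2 * K) := by ring
    _ ≤ k * W := Nat.mul_le_mul_left _ h3
  have t3 : k * K ≤ C * W := by linarith
  have t4 : k * W ≤ (2 * C) * W := by
    have : (2 * C) * W = C * W + C * W := by ring
    linarith
  exact Nat.le_of_mul_le_mul_right t4 hW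

lemma list_counts (v0 v1 v2 v3 v4 : ℕ) :
    ∀ l : List ℕ, (∀ y ∈ l, y = v0 ∨ y = v1 ∨ y = v2 ∨ y = v3 ∨ y = v4) →
    ∃ i j j2 k k2 : ℕ,
      l.sum = i * v0 + j * v1 + j2 * v2 + k * v3 + k2 * v4 ∧
      l.length = i + j + j2 + k + k2 := by
  intro l
  induction l with
  | nil => exact fun _ => ⟨0, 0, 0, 0, 0, by simp, by simp⟩
  | cons a t ih =>
    intro h
    obtain ⟨i, j, j2, k, k2, hs, hl⟩ := ih (fun y hy => h y (List.mem_cons_of_mem _ hy))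
    rcases h a List.mem_cons_self with rfl|rfl|rfl|rfl|rfl
    · exact ⟨i+1, j, j2, k, k2, by simp [List.sum_cons, hs]; ring, by simp [hl]; omega⟩
    · exact ⟨i, j+1, j2, k, k2, by simp [List.sum_cons, hs]; ring, by simp [hl]; omega⟩
    · exact ⟨i, j, j2+1, k, k2, by simp [List.sum_cons, hs]; ring, by simp [hl]; omega⟩
    · exact ⟨i, j, j2, k+1, k2, by simp [List.sum_cons, hs]; ring, by simp [hl]; omega⟩
    · exact ⟨i, j, j2, k, k2+1, by simp [List.sum_cons, hs]; ring, by simp [hl]; omega⟩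

set_option maxHeartbeats 4000000 in
lemma master (m m' c : ℕ) (hm : 2 ≤ m) (hmc : m ≤ c) (hm' : 2 ≤ m') (hm'c : m' ≤ c) :
    ∃ T : AddSubmonoid ℕ, (Set.Finite {n : ℕ | n ∉ T}) ∧
      ∃ x ∈ T, AS T x = ({m, m', c} : Set ℕ) := by
  have hc2 : 2 ≤ c := le_trans hm hmc
  have hc0 : 0 < c := by omega
  set s : ℕ := c*c with hs_def
  set D : ℕ := 5*s with hD_def
  set W : ℕ := 100*(s*s) with hW_def
  set M : ℕ := c*W + 1 with hM_def
  clear_value s D W M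
  have h2cs : 2*c ≤ s := by rw [hs_def]; exact Nat.mul_le_mul_right c hc2
  have hcs : c < s := by omega
  have hs1 : 1 ≤ s := by omega
  have hss : s ≤ s*s := Nat.le_mul_of_pos_left s (by omega)
  have hcss : c*s ≤ s*s := Nat.mul_le_mul_right s (by omega)
  have hP1 : 1 ≤ s*s := le_trans hs1 hss
  have hcDeq : c*D = 5*(c*s) := by rw [hD_def]; ring
  have hD1 : 1 ≤ D := by omega
  have hW0 : 0 < W := by rw [hW_def]; linarith
  have hWD : 2*(c*D) ≤ W := by rw [hW_def]; linarith
  have hW3 : D + 2*(c*D) < W := by rw [hD_def, hW_def]; linarith [hcDeq]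
  have hED : 2*c + 2*(c*c) + c < D := by rw [hD_def]; linarith [hs_def.symm.le, hcs]
  have hABW : (2*c + 2*(c*c) + c) * (D + 1) < W := by
    have h1 : 2*c + 2*(c*c) + c ≤ 5*s := by
      have : c*c = s := hs_def.symm
      linarith [hcs]
    have h2 : D + 1 ≤ 6*s := by rw [hD_def]; linarith
    have h3 : (2*c + 2*(c*c) + c) * (D + 1) ≤ (5*s)*(6*s) := Nat.mul_le_mul h1 h2
    have h4 : (5*s)*(6*s) = 30*(s*s) := by ring
    rw [hW_def]; linarith
  have hcW : c < W := by rw [hW_def]; linarith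
  have hCD1 : 1 ≤ c*D := by
    calc 1 = 1*1 := by ring
    _ ≤ c*D := Nat.mul_le_mul (by omega) hD1
  have hcDW : c*D < W := by linarith
  have hcCD : c ≤ c*D := Nat.le_mul_of_pos_right c (by omega)
  -- the two big generators
  set q3 : ℕ := c - m + 1 with hq3_def
  set q4 : ℕ := c - m' + 1 with hq4_def
  clear_value q3 q4
  have hq31 : 0 < q3 := by omega
  have hq41 : 0 < q4 := by omega
  have hq3c : q3 ≤ c := by omega
  have hq4c : q4 ≤ c := by omega
  set g3 : ℕ := q3*W - (m-1) with hg3_def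
  set g4 : ℕ := q4*W - (m'-1)*D with hg4_def
  clear_value g3 g4
  have hWq3 : W ≤ q3*W := Nat.le_mul_of_pos_left W hq31
  have hWq4 : W ≤ q4*W := Nat.le_mul_of_pos_left W hq41
  have hq3W : q3*W ≤ c*W := Nat.mul_le_mul_right W hq3c
  have hq4W : q4*W ≤ c*W := Nat.mul_le_mul_right W hq4c
  have hm'D : (m'-1)*D ≤ c*D := Nat.mul_le_mul_right D (by omega)
  have hg3 : g3 + (m-1) = q3*W := by
    rw [hg3_def]
    refine Nat.sub_add_cancel ?_
    have : m - 1 ≤ c := by omega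
    linarith
  have hg4 : g4 + (m'-1)*D = q4*W := by
    rw [hg4_def]
    refine Nat.sub_add_cancel ?_
    linarith
  have hg3le : g3 ≤ c*W := by linarith
  have hg4le : g4 ≤ c*W := by linarith [Nat.zero_le ((m'-1)*D)]
  have hg3W : W ≤ g3 + c*D := by
    have : m - 1 ≤ c*D := by omega
    linarith
  have hg4W : W ≤ g4 + c*D := by linarith
  have hg3pos : 0 < g3 := by
    have : m - 1 ≤ c := by omega
    linarith
  have hg4pos : 0 < g4 := by linarith [hm'D]
  have hg3M : g3 < M := by rw [hM_def]; linarith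
  have hg4M : g4 < M := by rw [hM_def]; linarith
  have hxM : c*W < M := by rw [hM_def]; linarith
  have hWM : W ≤ M := by
    have : W ≤ c*W := Nat.le_mul_of_pos_left W hc0
    rw [hM_def]; linarith
  -- ℤ identities
  have e2 : ((m - 1 : ℕ) : ℤ) = (m:ℤ) - 1 := by omega
  have e2' : ((m' - 1 : ℕ) : ℤ) = (m':ℤ) - 1 := by omega
  have ezq3 : ((q3 : ℕ) : ℤ) = (c:ℤ) - m + 1 := by omega
  have ezq4 : ((q4 : ℕ) : ℤ) = (c:ℤ) - m' + 1 := by omega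
  have zg3 : (g3:ℤ) = ((c:ℤ) - m + 1) * W - ((m:ℤ) - 1) := by
    have h := congrArg (fun t : ℕ => (t:ℤ)) hg3
    push_cast [e2] at h
    rw [ezq3] at h
    linarith
  have zg4 : (g4:ℤ) = ((c:ℤ) - m' + 1) * W - ((m':ℤ) - 1) * D := by
    have h := congrArg (fun t : ℕ => (t:ℤ)) hg4
    push_cast [e2'] at h
    rw [ezq4] at h
    linarith
  -- generators and the monoid
  set gens : Set ℕ := {W, W+1, W+D, g3, g4, M, M+1} with hgens_def
  set T : AddSubmonoid ℕ := AddSubmonoid.closure gens with hT_def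
  have hmemW : W ∈ T := AddSubmonoid.subset_closure (by simp [hgens_def])
  have hmem1 : W+1 ∈ T := AddSubmonoid.subset_closure (by simp [hgens_def])
  have hmemD : W+D ∈ T := AddSubmonoid.subset_closure (by simp [hgens_def])
  have hmem3 : g3 ∈ T := AddSubmonoid.subset_closure (by simp [hgens_def])
  have hmem4 : g4 ∈ T := AddSubmonoid.subset_closure (by simp [hgens_def])
  have hmemM : M ∈ T := AddSubmonoid.subset_closure (by simp [hgens_def])
  have hmemM1 : M+1 ∈ T := AddSubmonoid.subset_closure (by simp [hgens_def])
  have hgen_cases : ∀ y ∈ gens,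
      y = W ∨ y = W+1 ∨ y = W+D ∨ y = g3 ∨ y = g4 ∨ y = M ∨ y = M+1 := by
    intro y hy
    simpa only [hgens_def, Set.mem_insert_iff, Set.mem_singleton_iff] using hy
  have hgen_pos : ∀ y ∈ gens, 0 < y := by
    intro y hy
    rcases hgen_cases y hy with rfl|rfl|rfl|rfl|rfl|rfl|rfl <;> omega
  have hgen_low : ∀ y ∈ gens, W ≤ y + c*D := by
    intro y hy
    rcases hgen_cases y hy with rfl|rfl|rfl|rfl|rfl|rfl|rfl <;> linarith
  -- minimal nonzero element bound
  have hmin : ∀ t, t ∈ T → t ≠ 0 → W ≤ t + c*D := by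
    intro t ht ht0
    obtain ⟨l, hl, hsum⟩ := AddSubmonoid.exists_list_of_mem_closure ht
    match l, hl, hsum with
    | [], _, hsum => exact absurd hsum.symm ht0
    | (a :: l'), hl, hsum =>
      have ha : a ∈ gens := hl a List.mem_cons_self
      have h1 : a ≤ t := by
        rw [← hsum]
        exact List.single_le_sum (fun x _ => Nat.zero_le x) a List.mem_cons_self
      have h2 := hgen_low a ha
      linarith
  -- small elements have representations by small generators
  have hsmall : ∀ t, t ∈ T → t < M → ∃ l : List ℕ,
      (∀ y ∈ l, y = W ∨ y = W+1 ∨ y = W+D ∨ y = g3 ∨ y = g4) ∧ l.sum = t := by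
    intro t ht htM
    obtain ⟨l, hl, hsum⟩ := AddSubmonoid.exists_list_of_mem_closure ht
    refine ⟨l, ?_, hsum⟩
    intro y hy
    have hyle : y ≤ t := by
      rw [← hsum]
      exact List.single_le_sum (fun x _ => Nat.zero_le x) y hy
    rcases hgen_cases y (hl y hy) with rfl|rfl|rfl|rfl|rfl|rfl|rfl
    · exact Or.inl rfl
    · exact Or.inr (Or.inl rfl)
    · exact Or.inr (Or.inr (Or.inl rfl))
    · exact Or.inr (Or.inr (Or.inr (Or.inl rfl)))
    · exact Or.inr (Or.inr (Or.inr (Or.inr rfl)))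
    · omega
    · omega
  -- count bounds for any representation with value ≤ c*W
  have hbounds : ∀ (i j j2 k k2 R : ℕ), R ≤ c*W →
      i*W + j*(W+1) + j2*(W+D) + k*g3 + k2*g4 = R →
      i ≤ 2*c ∧ j ≤ 2*c ∧ j2 ≤ 2*c ∧ k ≤ 2*c ∧ k2 ≤ 2*c := by
    intro i j j2 k k2 R hR heq
    have hnn : 0 ≤ i*W ∧ 0 ≤ j*(W+1) ∧ 0 ≤ j2*(W+D) ∧ 0 ≤ k*g3 ∧ 0 ≤ k2*g4 :=
      ⟨Nat.zero_le _, Nat.zero_le _, Nat.zero_le _, Nat.zero_le _, Nat.zero_le _⟩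
    obtain ⟨n1, n2, n3, n4, n5⟩ := hnn
    have h1 : i*W ≤ c*W := by linarith
    have h2 : j*(W+1) ≤ c*W := by linarith
    have h3 : j2*(W+D) ≤ c*W := by linarith
    have h4 : k*g3 ≤ c*W := by linarith
    have h5 : k2*g4 ≤ c*W := by linarith
    exact ⟨count_bound hW0 h1 (by linarith) hWD,
      count_bound hW0 h2 (by linarith) hWD,
      count_bound hW0 h3 (by linarith) hWD,
      count_bound hW0 h4 hg3W hWD,
      count_bound hW0 h5 hg4W hWD⟩
  -- digit analysis
  have hanalyze : ∀ (i j j2 k k2 : ℕ) (δ3 δ4 : ℕ), δ3 + δ4 ≤ 1 →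
      ((i:ℤ)*W + (j:ℤ)*((W:ℤ)+1) + (j2:ℤ)*((W:ℤ)+D) + (k:ℤ)*g3 + (k2:ℤ)*g4
        = (1 - (δ3:ℤ) - (δ4:ℤ)) * ((c:ℤ)*W) + (δ3:ℤ)*g3 + (δ4:ℤ)*g4) →
      i ≤ 2*c → j ≤ 2*c → j2 ≤ 2*c → k ≤ 2*c → k2 ≤ 2*c →
      (((j:ℤ) + (δ3:ℤ)*((m:ℤ)-1) = (k:ℤ)*((m:ℤ)-1)) ∧
       ((j2:ℤ) + (δ4:ℤ)*((m':ℤ)-1) = (k2:ℤ)*((m':ℤ)-1)) ∧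
       ((i:ℤ) + j + j2 + k*((c:ℤ)-m+1) + k2*((c:ℤ)-m'+1)
          = (1 - (δ3:ℤ) - (δ4:ℤ)) * c + (δ3:ℤ)*((c:ℤ)-m+1) + (δ4:ℤ)*((c:ℤ)-m'+1))) := by
    intro i j j2 k k2 δ3 δ4 hδ heq hbi hbj hbj2 hbk hbk2
    have hδ3 : δ3 ≤ 1 := by omega
    have hδ4 : δ4 ≤ 1 := by omega
    have hm1 : (1:ℤ) ≤ (m:ℤ) := by exact_mod_cast Nat.one_le_iff_ne_zero.mpr (by omega)
    have hm'1 : (1:ℤ) ≤ (m':ℤ) := by exact_mod_cast Nat.one_le_iff_ne_zero.mpr (by omega)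
    have hmc' : (m:ℤ) ≤ (c:ℤ) := by exact_mod_cast hmc
    have hm'c' : (m':ℤ) ≤ (c:ℤ) := by exact_mod_cast hm'c
    have hcz : (2:ℤ) ≤ (c:ℤ) := by exact_mod_cast hc2
    set A1 : ℤ := (j:ℤ) - k*((m:ℤ)-1) + δ3*((m:ℤ)-1) with hA1_def
    set A2 : ℤ := (j2:ℤ) - k2*((m':ℤ)-1) + δ4*((m':ℤ)-1) with hA2_def
    set B : ℤ := (i:ℤ) + j + j2 + k*((c:ℤ)-m+1) + k2*((c:ℤ)-m'+1)
      - ((1 - (δ3:ℤ) - (δ4:ℤ)) * c + (δ3:ℤ)*((c:ℤ)-m+1) + (δ4:ℤ)*((c:ℤ)-m'+1)) with hB_def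
    have hzeq : (A1 + (D:ℤ)*A2) + (W:ℤ)*B = 0 := by
      rw [hA1_def, hA2_def, hB_def]
      linear_combination heq - ((k:ℤ) - (δ3:ℤ))*zg3 - ((k2:ℤ) - (δ4:ℤ))*zg4
    have hm1' : (0:ℤ) ≤ (m:ℤ) - 1 := by linarith
    have hm'1' : (0:ℤ) ≤ (m':ℤ) - 1 := by linarith
    have hkz : (k:ℤ) ≤ 2*(c:ℤ) := by exact_mod_cast hbk
    have hk2z : (k2:ℤ) ≤ 2*(c:ℤ) := by exact_mod_cast hbk2
    have hjz : (j:ℤ) ≤ 2*(c:ℤ) := by exact_mod_cast hbj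
    have hj2z : (j2:ℤ) ≤ 2*(c:ℤ) := by exact_mod_cast hbj2
    have hδ3z : (δ3:ℤ) ≤ 1 := by exact_mod_cast hδ3
    have hδ4z : (δ4:ℤ) ≤ 1 := by exact_mod_cast hδ4
    have hδ3nn : (0:ℤ) ≤ (δ3:ℤ) := Int.natCast_nonneg δ3
    have hδ4nn : (0:ℤ) ≤ (δ4:ℤ) := Int.natCast_nonneg δ4
    have hkm : (k:ℤ)*((m:ℤ)-1) ≤ 2*(c:ℤ)*(c:ℤ) := by
      calc (k:ℤ)*((m:ℤ)-1) ≤ (2*(c:ℤ))*((m:ℤ)-1) := mul_le_mul_of_nonneg_right hkz hm1'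
      _ ≤ (2*(c:ℤ))*(c:ℤ) := mul_le_mul_of_nonneg_left (by linarith) (by linarith)
      _ = 2*(c:ℤ)*(c:ℤ) := by ring
    have hkm' : (k2:ℤ)*((m':ℤ)-1) ≤ 2*(c:ℤ)*(c:ℤ) := by
      calc (k2:ℤ)*((m':ℤ)-1) ≤ (2*(c:ℤ))*((m':ℤ)-1) := mul_le_mul_of_nonneg_right hk2z hm'1'
      _ ≤ (2*(c:ℤ))*(c:ℤ) := mul_le_mul_of_nonneg_left (by linarith) (by linarith)
      _ = 2*(c:ℤ)*(c:ℤ) := by ring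
    have hknn : (0:ℤ) ≤ (k:ℤ)*((m:ℤ)-1) := mul_nonneg (Int.natCast_nonneg k) hm1'
    have hknn' : (0:ℤ) ≤ (k2:ℤ)*((m':ℤ)-1) := mul_nonneg (Int.natCast_nonneg k2) hm'1'
    have hδ3m1 : (0:ℤ) ≤ (δ3:ℤ)*((m:ℤ)-1) := mul_nonneg hδ3nn hm1'
    have hδ3m2 : (δ3:ℤ)*((m:ℤ)-1) ≤ (c:ℤ) := by
      calc (δ3:ℤ)*((m:ℤ)-1) ≤ 1*((m:ℤ)-1) := mul_le_mul_of_nonneg_right hδ3z hm1'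
      _ ≤ (c:ℤ) := by linarith
    have hδ4m1 : (0:ℤ) ≤ (δ4:ℤ)*((m':ℤ)-1) := mul_nonneg hδ4nn hm'1'
    have hδ4m2 : (δ4:ℤ)*((m':ℤ)-1) ≤ (c:ℤ) := by
      calc (δ4:ℤ)*((m':ℤ)-1) ≤ 1*((m':ℤ)-1) := mul_le_mul_of_nonneg_right hδ4z hm'1'
      _ ≤ (c:ℤ) := by linarith
    set E : ℤ := 2*(c:ℤ) + 2*((c:ℤ)*(c:ℤ)) + (c:ℤ) with hE_def
    have hA1bound : |A1| ≤ E := by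
      rw [hA1_def, hE_def, abs_le]
      constructor
      · linarith [Int.natCast_nonneg j]
      · linarith
    have hA2bound : |A2| ≤ E := by
      rw [hA2_def, hE_def, abs_le]
      constructor
      · linarith [Int.natCast_nonneg j2]
      · linarith
    have hEpos : (0:ℤ) ≤ E := by rw [hE_def]; positivity
    have hED' : E < (D:ℤ) := by
      rw [hE_def]
      exact_mod_cast hED
    have hABW' : E * ((D:ℤ) + 1) < (W:ℤ) := by
      rw [hE_def]
      exact_mod_cast hABW
    have habs : |A1 + (D:ℤ)*A2| < (W:ℤ) := by
      have hDnn : (0:ℤ) ≤ (D:ℤ) := Int.natCast_nonneg D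
      calc |A1 + (D:ℤ)*A2| ≤ |A1| + |(D:ℤ)*A2| := abs_add_le _ _
      _ = |A1| + (D:ℤ)*|A2| := by rw [abs_mul, abs_of_nonneg hDnn]
      _ ≤ E + (D:ℤ)*E := by
            have : (D:ℤ)*|A2| ≤ (D:ℤ)*E := mul_le_mul_of_nonneg_left hA2bound hDnn
            linarith
      _ = E * ((D:ℤ)+1) := by ring
      _ < (W:ℤ) := hABW'
    obtain ⟨hAD0, hB0⟩ := digit_aux (by exact_mod_cast hW0) habs hzeq
    have habs1 : |A1| < (D:ℤ) := lt_of_le_of_lt hA1bound hED'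
    obtain ⟨hA10, hA20⟩ := digit_aux (by exact_mod_cast hD1) habs1 hAD0
    refine ⟨?_, ?_, ?_⟩
    · rw [hA1_def] at hA10; linarith
    · rw [hA2_def] at hA20; linarith
    · rw [hB_def] at hB0; linarith
  -- specialized: representations of x = c*W
  have keyX : ∀ (i j j2 k k2 : ℕ),
      i*W + j*(W+1) + j2*(W+D) + k*g3 + k2*g4 = c*W →
      i + j + j2 + k + k2 = c ∨ i + j + j2 + k + k2 = m ∨ i + j + j2 + k + k2 = m' := by
    intro i j j2 k k2 heq
    obtain ⟨hbi, hbj, hbj2, hbk, hbk2⟩ := hbounds i j j2 k k2 (c*W) le_rfl heq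
    have hcast : ((i*W + j*(W+1) + j2*(W+D) + k*g3 + k2*g4 : ℕ) : ℤ) = ((c*W : ℕ):ℤ) := by
      exact_mod_cast congrArg (fun t : ℕ => (t:ℤ)) heq
    push_cast at hcast
    obtain ⟨hjZ, hj2Z, hB⟩ := hanalyze i j j2 k k2 0 0 (by omega)
      (by push_cast; linarith) hbi hbj hbj2 hbk hbk2
    simp only [Nat.cast_zero, zero_mul, add_zero, sub_zero, one_mul, zero_add] at hjZ hj2Z hB
    have hIc : (i:ℤ) + (k:ℤ)*(c:ℤ) + (k2:ℤ)*(c:ℤ) = (c:ℤ) := by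
      linear_combination hB - hjZ - hj2Z
    have hIcn : i + k*c + k2*c = c := by exact_mod_cast hIc
    have hksum : k + k2 ≤ 1 := by
      by_contra hcon
      push_neg at hcon
      have h2 : 2*c ≤ (k+k2)*c := Nat.mul_le_mul_right c (by omega)
      have h3 : (k+k2)*c = k*c + k2*c := by ring
      linarith
    have hk01 : k = 0 ∨ k = 1 := by omega
    have hk201 : k2 = 0 ∨ k2 = 1 := by omega
    rcases hk01 with rfl|rfl <;> rcases hk201 with rfl|rfl <;>
      simp only [Nat.cast_zero, Nat.cast_one, zero_mul, one_mul] at hjZ hj2Z hIcn <;>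
      omega
  -- specialized: representations of g3 resp. g4 are trivial
  have key3 : ∀ (i j j2 k k2 : ℕ),
      i*W + j*(W+1) + j2*(W+D) + k*g3 + k2*g4 = g3 →
      i + j + j2 + k + k2 ≤ 1 := by
    intro i j j2 k k2 heq
    obtain ⟨hbi, hbj, hbj2, hbk, hbk2⟩ := hbounds i j j2 k k2 g3 hg3le heq
    have hcast : ((i*W + j*(W+1) + j2*(W+D) + k*g3 + k2*g4 : ℕ) : ℤ) = ((g3 : ℕ):ℤ) := by
      exact_mod_cast congrArg (fun t : ℕ => (t:ℤ)) heq
    push_cast at hcast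
    obtain ⟨hjZ, hj2Z, hB⟩ := hanalyze i j j2 k k2 1 0 (by omega)
      (by push_cast; linarith) hbi hbj hbj2 hbk hbk2
    simp only [Nat.cast_zero, Nat.cast_one, zero_mul, one_mul, add_zero, sub_zero] at hjZ hj2Z hB
    -- hB : i + j + j2 + k*(c-m+1) + k2*(c-m'+1) = (1-1-0)*c + (c-m+1)
    have hmz : (2:ℤ) ≤ (m:ℤ) := by exact_mod_cast hm
    have hmz' : (2:ℤ) ≤ (m':ℤ) := by exact_mod_cast hm'
    have hmcz : (m:ℤ) ≤ (c:ℤ) := by exact_mod_cast hmc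
    have hmcz' : (m':ℤ) ≤ (c:ℤ) := by exact_mod_cast hm'c
    have hq3z : (1:ℤ) ≤ (c:ℤ) - m + 1 := by linarith
    have hq4z : (1:ℤ) ≤ (c:ℤ) - m' + 1 := by linarith
    have hinn : (0:ℤ) ≤ (i:ℤ) := Int.natCast_nonneg i
    have hjnn : (0:ℤ) ≤ (j:ℤ) := Int.natCast_nonneg j
    have hj2nn : (0:ℤ) ≤ (j2:ℤ) := Int.natCast_nonneg j2
    have hk2q : (0:ℤ) ≤ (k2:ℤ)*((c:ℤ)-m'+1) :=
      mul_nonneg (Int.natCast_nonneg k2) (by linarith)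
    have hkq : (0:ℤ) ≤ (k:ℤ)*((c:ℤ)-m+1) :=
      mul_nonneg (Int.natCast_nonneg k) (by linarith)
    have hk1 : k = 1 := by
      have hknot0 : k ≠ 0 := by
        intro h
        subst h
        simp only [Nat.cast_zero, zero_mul] at hjZ
        linarith
      have hkle : k ≤ 1 := by
        by_contra hcon
        push_neg at hcon
        have h2z : (2:ℤ) ≤ (k:ℤ) := by exact_mod_cast hcon
        have : (2:ℤ)*((c:ℤ)-m+1) ≤ (k:ℤ)*((c:ℤ)-m+1) :=
          mul_le_mul_of_nonneg_right h2z (by linarith)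
        linarith
      omega
    subst hk1
    simp only [Nat.cast_one, one_mul] at hjZ hB
    have hj0 : (j:ℤ) = 0 := by linarith
    have hk20 : k2 = 0 := by
      by_contra hcon
      have h1z : (1:ℤ) ≤ (k2:ℤ) := by exact_mod_cast Nat.one_le_iff_ne_zero.mpr hcon
      have : (1:ℤ)*((c:ℤ)-m'+1) ≤ (k2:ℤ)*((c:ℤ)-m'+1) :=
        mul_le_mul_of_nonneg_right h1z (by linarith)
      linarith
    subst hk20
    simp only [Nat.cast_zero, zero_mul, add_zero] at hB
    have hi0 : (i:ℤ) = 0 := by linarith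
    have hj20 : (j2:ℤ) = 0 := by linarith
    have : i = 0 := by exact_mod_cast hi0
    have : j = 0 := by exact_mod_cast hj0
    have : j2 = 0 := by exact_mod_cast hj20
    omega
  have key4 : ∀ (i j j2 k k2 : ℕ),
      i*W + j*(W+1) + j2*(W+D) + k*g3 + k2*g4 = g4 →
      i + j + j2 + k + k2 ≤ 1 := by
    intro i j j2 k k2 heq
    obtain ⟨hbi, hbj, hbj2, hbk, hbk2⟩ := hbounds i j j2 k k2 g4 hg4le heq
    have hcast : ((i*W + j*(W+1) + j2*(W+D) + k*g3 + k2*g4 : ℕ) : ℤ) = ((g4 : ℕ):ℤ) := by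
      exact_mod_cast congrArg (fun t : ℕ => (t:ℤ)) heq
    push_cast at hcast
    obtain ⟨hjZ, hj2Z, hB⟩ := hanalyze i j j2 k k2 0 1 (by omega)
      (by push_cast; linarith) hbi hbj hbj2 hbk hbk2
    simp only [Nat.cast_zero, Nat.cast_one, zero_mul, one_mul, add_zero, zero_add, sub_zero] at hjZ hj2Z hB
    have hmz : (2:ℤ) ≤ (m:ℤ) := by exact_mod_cast hm
    have hmz' : (2:ℤ) ≤ (m':ℤ) := by exact_mod_cast hm'
    have hmcz : (m:ℤ) ≤ (c:ℤ) := by exact_mod_cast hmc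
    have hmcz' : (m':ℤ) ≤ (c:ℤ) := by exact_mod_cast hm'c
    have hq3z : (1:ℤ) ≤ (c:ℤ) - m + 1 := by linarith
    have hq4z : (1:ℤ) ≤ (c:ℤ) - m' + 1 := by linarith
    have hinn : (0:ℤ) ≤ (i:ℤ) := Int.natCast_nonneg i
    have hjnn : (0:ℤ) ≤ (j:ℤ) := Int.natCast_nonneg j
    have hj2nn : (0:ℤ) ≤ (j2:ℤ) := Int.natCast_nonneg j2
    have hk2q : (0:ℤ) ≤ (k2:ℤ)*((c:ℤ)-m'+1) :=
      mul_nonneg (Int.natCast_nonneg k2) (by linarith)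
    have hkq : (0:ℤ) ≤ (k:ℤ)*((c:ℤ)-m+1) :=
      mul_nonneg (Int.natCast_nonneg k) (by linarith)
    have hk21 : k2 = 1 := by
      have hknot0 : k2 ≠ 0 := by
        intro h
        subst h
        simp only [Nat.cast_zero, zero_mul] at hj2Z
        linarith
      have hkle : k2 ≤ 1 := by
        by_contra hcon
        push_neg at hcon
        have h2z : (2:ℤ) ≤ (k2:ℤ) := by exact_mod_cast hcon
        have : (2:ℤ)*((c:ℤ)-m'+1) ≤ (k2:ℤ)*((c:ℤ)-m'+1) :=
          mul_le_mul_of_nonneg_right h2z (by linarith)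
        linarith
      omega
    subst hk21
    simp only [Nat.cast_one, one_mul] at hj2Z hB
    have hj20 : (j2:ℤ) = 0 := by linarith
    have hk0 : k = 0 := by
      by_contra hcon
      have h1z : (1:ℤ) ≤ (k:ℤ) := by exact_mod_cast Nat.one_le_iff_ne_zero.mpr hcon
      have : (1:ℤ)*((c:ℤ)-m+1) ≤ (k:ℤ)*((c:ℤ)-m+1) :=
        mul_le_mul_of_nonneg_right h1z (by linarith)
      linarith
    subst hk0
    simp only [Nat.cast_zero, zero_mul, add_zero] at hB
    have hi0 : (i:ℤ) = 0 := by linarith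
    have hj0 : (j:ℤ) = 0 := by linarith
    have : i = 0 := by exact_mod_cast hi0
    have : j = 0 := by exact_mod_cast hj0
    have : j2 = 0 := by exact_mod_cast hj20
    omega
  -- atom classification for small elements
  have hatom_small : ∀ y, NumAtom T y → y < M →
      y = W ∨ y = W+1 ∨ y = W+D ∨ y = g3 ∨ y = g4 := by
    intro y hy hyM
    obtain ⟨hyT, hy0, hynot⟩ := hy
    obtain ⟨l, hl, hsum⟩ := hsmall y hyT hyM
    match l, hl, hsum with
    | [], _, hsum => exact absurd hsum.symm hy0
    | [a], hl, hsum =>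
      have hya : y = a := by simp at hsum; omega
      rw [hya]
      exact hl a (by simp)
    | (a :: b :: l'), hl, hsum =>
      exfalso
      apply hynot
      have haT : a ∈ T := by
        rcases hl a (by simp) with rfl|rfl|rfl|rfl|rfl <;> assumption
      have hbT : (b :: l').sum ∈ T := by
        apply list_sum_mem
        intro z hz
        rcases hl z (List.mem_cons_of_mem _ hz) with rfl|rfl|rfl|rfl|rfl <;> assumption
      have ha0 : a ≠ 0 := by
        rcases hl a (by simp) with rfl|rfl|rfl|rfl|rfl <;> omega
      have hb0 : (b :: l').sum ≠ 0 := by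
        have hble : b ≤ (b :: l').sum :=
          List.single_le_sum (fun z _ => Nat.zero_le z) b (by simp)
        rcases hl b (by simp) with rfl|rfl|rfl|rfl|rfl <;> omega
      exact ⟨a, (b :: l').sum, haT, hbT, ha0, hb0, by simp at hsum ⊢; omega⟩
  -- the three small generators are atoms (size argument)
  have hatom_easy : ∀ g, g ∈ gens → g ≤ W + D → NumAtom T g := by
    intro g hg hgle
    refine ⟨AddSubmonoid.subset_closure hg, by have := hgen_pos g hg; omega, ?_⟩
    rintro ⟨b, c', hb, hc', hb0, hc'0, hbc⟩
    have h1 := hmin b hb hb0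
    have h2 := hmin c' hc' hc'0
    linarith
  have hatomW : NumAtom T W := hatom_easy W (by simp [hgens_def]) (by omega)
  have hatom1 : NumAtom T (W+1) := hatom_easy (W+1) (by simp [hgens_def]) (by omega)
  have hatomD : NumAtom T (W+D) := hatom_easy (W+D) (by simp [hgens_def]) (by omega)
  -- g3, g4 are atoms
  have hatom34 : ∀ g, g ∈ gens → g < M →
      (∀ (i j j2 k k2 : ℕ), i*W + j*(W+1) + j2*(W+D) + k*g3 + k2*g4 = g →
        i + j + j2 + k + k2 ≤ 1) → NumAtom T g := by
    intro g hg hgM hkey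
    refine ⟨AddSubmonoid.subset_closure hg, by have := hgen_pos g hg; omega, ?_⟩
    rintro ⟨b, c', hb, hc', hb0, hc'0, hbc⟩
    obtain ⟨lb, hlb, hlbsum⟩ := hsmall b hb (by omega)
    obtain ⟨lc, hlc, hlcsum⟩ := hsmall c' hc' (by omega)
    have hlbne : lb ≠ [] := by
      intro h; rw [h] at hlbsum; simp at hlbsum; exact hb0 hlbsum.symm
    have hlcne : lc ≠ [] := by
      intro h; rw [h] at hlcsum; simp at hlcsum; exact hc'0 hlcsum.symm
    obtain ⟨i, j, j2, k, k2, hs', hlen⟩ := list_counts W (W+1) (W+D) g3 g4 (lb ++ lc)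
      (by intro y hy; rcases List.mem_append.mp hy with h|h
          · exact hlb y h
          · exact hlc y h)
    rw [List.sum_append, hlbsum, hlcsum, ← hbc] at hs'
    have hcount := hkey i j j2 k k2 hs'.symm
    have hlen2 : 2 ≤ (lb ++ lc).length := by
      rw [List.length_append]
      have hb1 : 0 < lb.length := List.length_pos_iff.mpr hlbne
      have hc1 : 0 < lc.length := List.length_pos_iff.mpr hlcne
      omega
    omega
  have hatom3 : NumAtom T g3 := hatom34 g3 (by simp [hgens_def]) hg3M key3
  have hatom4 : NumAtom T g4 := hatom34 g4 (by simp [hgens_def]) hg4M key4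
  -- x ∈ T
  have hxT : c*W ∈ T := by
    have h := nsmul_mem hmemW c
    simpa [smul_eq_mul] using h
  -- the two exotic factorizations sum correctly
  have hfact_m : (m-1)*(W+1) + g3 = c*W := by
    have hz : (((m-1)*(W+1) + g3 : ℕ) : ℤ) = ((c*W : ℕ) : ℤ) := by
      push_cast [e2]
      linear_combination zg3
    exact_mod_cast hz
  have hfact_m' : (m'-1)*(W+D) + g4 = c*W := by
    have hz : (((m'-1)*(W+D) + g4 : ℕ) : ℤ) = ((c*W : ℕ) : ℤ) := by
      push_cast [e2']
      linear_combination zg4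
    exact_mod_cast hz
  refine ⟨T, ?_, c*W, hxT, ?_⟩
  · -- finite complement
    apply Set.Finite.subset (Set.finite_Iio (M*M))
    intro n hn
    simp only [Set.mem_setOf_eq] at hn
    simp only [Set.mem_Iio]
    by_contra hcon
    push_neg at hcon
    apply hn
    have hM0 : 0 < M := by omega
    have hdm := Nat.div_add_mod n M
    have hr : n % M < M := Nat.mod_lt _ hM0
    have hq : M ≤ n / M := by
      rw [Nat.le_div_iff_mul_le hM0]
      exact hcon
    have hkey : n = (n % M)*(M+1) + (n / M - n % M)*M := by
      have h1 : (n / M - n % M) * M + (n % M) * M = (n / M) * M := by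
        rw [← Nat.add_mul]
        congr 1
        omega
      have h2 : (n % M)*(M+1) = (n % M)*M + (n % M) := by ring
      have h3 : M * (n / M) = (n / M) * M := by ring
      linarith
    rw [hkey]
    refine AddSubmonoid.add_mem _ ?_ ?_
    · have h := nsmul_mem hmemM1 (n % M)
      simpa [smul_eq_mul] using h
    · have h := nsmul_mem hmemM (n / M - n % M)
      simpa [smul_eq_mul] using h
  · -- AS T (c*W) = {m, m', c}
    ext n
    simp only [AS, Set.mem_setOf_eq, Set.mem_insert_iff, Set.mem_singleton_iff]
    constructor
    · rintro ⟨sm, hsat, hscard, hssum⟩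
      have hels : ∀ y ∈ sm.toList, y = W ∨ y = W+1 ∨ y = W+D ∨ y = g3 ∨ y = g4 := by
        intro y hy
        have hys : y ∈ sm := by rwa [Multiset.mem_toList] at hy
        have hyle : y ≤ sm.toList.sum :=
          List.single_le_sum (fun z _ => Nat.zero_le z) y hy
        rw [Multiset.sum_toList, hssum] at hyle
        exact hatom_small y (hsat y hys) (by omega)
      obtain ⟨i, j, j2, k, k2, hs', hlen⟩ := list_counts W (W+1) (W+D) g3 g4 sm.toList hels
      rw [Multiset.sum_toList, hssum] at hs'
      rw [Multiset.length_toList, hscard] at hlen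
      rcases keyX i j j2 k k2 hs'.symm with h|h|h
      · right; right; omega
      · left; omega
      · right; left; omega
    · intro hn
      rcases hn with h|h|h
      · refine ⟨Multiset.replicate (m-1) (W+1) + {g3}, ?_, ?_, ?_⟩
        · intro a ha
          rw [Multiset.mem_add] at ha
          rcases ha with ha|ha
          · rw [Multiset.eq_of_mem_replicate ha]; exact hatom1
          · rw [Multiset.mem_singleton.mp ha]; exact hatom3
        · simp only [Multiset.card_add, Multiset.card_replicate, Multiset.card_singleton]
          omega
        · rw [Multiset.sum_add, Multiset.sum_replicate, Multiset.sum_singleton, smul_eq_mul]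
          exact hfact_m
      · refine ⟨Multiset.replicate (m'-1) (W+D) + {g4}, ?_, ?_, ?_⟩
        · intro a ha
          rw [Multiset.mem_add] at ha
          rcases ha with ha|ha
          · rw [Multiset.eq_of_mem_replicate ha]; exact hatomD
          · rw [Multiset.mem_singleton.mp ha]; exact hatom4
        · simp only [Multiset.card_add, Multiset.card_replicate, Multiset.card_singleton]
          omega
        · rw [Multiset.sum_add, Multiset.sum_replicate, Multiset.sum_singleton, smul_eq_mul]
          exact hfact_m'
      · refine ⟨Multiset.replicate c W, ?_, ?_, ?_⟩
        · intro a ha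
          rw [Multiset.eq_of_mem_replicate ha]; exact hatomW
        · simp only [Multiset.card_replicate]; omega
        · rw [Multiset.sum_replicate, smul_eq_mul]
theorem stmt_18 (S : Finset ℕ) (hS : ∀ m ∈ S, 2 ≤ m) (h1 : 1 ≤ S.card) (h3 : S.card ≤ 3) :
    ∃ T : AddSubmonoid ℕ, (Set.Finite {m : ℕ | m ∉ T}) ∧
      ∃ x ∈ T, AS T x = ↑S := by
  interval_cases h : S.card
  · -- card = 1
    obtain ⟨a, rfl⟩ := Finset.card_eq_one.mp h
    have ha : 2 ≤ a := hS a (by simp)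
    obtain ⟨T, hT, x, hx, hAS⟩ := master a a a ha le_rfl ha le_rfl
    refine ⟨T, hT, x, hx, ?_⟩
    rw [hAS]
    ext z; simp only [Set.mem_insert_iff, Set.mem_singleton_iff, Finset.coe_insert,
        Finset.coe_singleton, Finset.mem_insert, Finset.mem_singleton, Finset.mem_coe];
        try tauto
  · -- card = 2
    obtain ⟨a, b, hab, rfl⟩ := Finset.card_eq_two.mp h
    have ha : 2 ≤ a := hS a (by simp)
    have hb : 2 ≤ b := hS b (by simp)
    rcases hab.lt_or_gt with hlt|hlt
    · obtain ⟨T, hT, x, hx, hAS⟩ := master a a b ha hlt.le ha hlt.le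
      refine ⟨T, hT, x, hx, ?_⟩
      rw [hAS]
      ext z; simp only [Set.mem_insert_iff, Set.mem_singleton_iff, Finset.coe_insert,
        Finset.coe_singleton, Finset.mem_insert, Finset.mem_singleton, Finset.mem_coe];
        try tauto
    · obtain ⟨T, hT, x, hx, hAS⟩ := master b b a hb hlt.le hb hlt.le
      refine ⟨T, hT, x, hx, ?_⟩
      rw [hAS]
      ext z; simp only [Set.mem_insert_iff, Set.mem_singleton_iff, Finset.coe_insert,
        Finset.coe_singleton, Finset.mem_insert, Finset.mem_singleton, Finset.mem_coe];
        try tauto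
  · -- card = 3
    obtain ⟨a, b, c, hab, hac, hbc, rfl⟩ := Finset.card_eq_three.mp h
    have ha : 2 ≤ a := hS a (by simp)
    have hb : 2 ≤ b := hS b (by simp)
    have hc : 2 ≤ c := hS c (by simp)
    by_cases h1' : a ≤ c
    · by_cases h2' : b ≤ c
      · obtain ⟨T, hT, x, hx, hAS⟩ := master a b c ha h1' hb h2'
        refine ⟨T, hT, x, hx, ?_⟩
        rw [hAS]
        ext z; simp only [Set.mem_insert_iff, Set.mem_singleton_iff, Finset.coe_insert,
        Finset.coe_singleton, Finset.mem_insert, Finset.mem_singleton, Finset.mem_coe];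
        try tauto
      · -- c < b, a ≤ c < b, so max is b
        push_neg at h2'
        obtain ⟨T, hT, x, hx, hAS⟩ := master a c b ha (by omega) hc (by omega)
        refine ⟨T, hT, x, hx, ?_⟩
        rw [hAS]
        ext z; simp only [Set.mem_insert_iff, Set.mem_singleton_iff, Finset.coe_insert,
        Finset.coe_singleton, Finset.mem_insert, Finset.mem_singleton, Finset.mem_coe];
        try tauto
    · push_neg at h1'  -- c < a
      by_cases h2' : b ≤ a
      · obtain ⟨T, hT, x, hx, hAS⟩ := master b c a hb h2' hc (by omega)
        refine ⟨T, hT, x, hx, ?_⟩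
        rw [hAS]
        ext z; simp only [Set.mem_insert_iff, Set.mem_singleton_iff, Finset.coe_insert,
        Finset.coe_singleton, Finset.mem_insert, Finset.mem_singleton, Finset.mem_coe];
        try tauto
      · push_neg at h2'  -- a < b, c < a < b, max is b
        obtain ⟨T, hT, x, hx, hAS⟩ := master a c b ha (by omega) hc (by omega)
        refine ⟨T, hT, x, hx, ?_⟩
        rw [hAS]
        ext z; simp only [Set.mem_insert_iff, Set.mem_singleton_iff, Finset.coe_insert,
        Finset.coe_singleton, Finset.mem_insert, Finset.mem_singleton, Finset.mem_coe];
        try tauto
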